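/- Let s ∈ ℝ, p ∈ (0,∞), q ∈ (0,∞], τ ∈ [0,∞). For the sequence norm ‖t‖_{ḟ^{s,τ}_{p,q}} = sup over dyadic cubes P of |P|^{-τ} ( ∫_P ( Σ_{Q⊂P dyadic} [ |Q|^{-s/n-1/2} |t_Q| χ_Q(x) ]^q )^{p/q} dx )^{1/p}, and the norm ‖t‖_{ḟ^{s+n(τ-1/p)}_{∞,∞}} = sup over dyadic cubes Q of |Q|^{-s/n-(τ-1/p)-1/2} |t_Q|, one always has ‖t‖_{ḟ^{s+n(τ-1/p)}_{∞,∞}} ≤ ‖t‖_{ḟ^{s,τ}_{p,q}} for every sequence t = {t_Q} indexed by dyadic cubes. -/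
import Mathlib


open MeasureTheory ENNReal

/-- A dyadic cube `Q_{jk} = 2^{-j}([0,1)^n + k)` in `ℝⁿ`, recorded by its
generation `j ∈ ℤ` and position `k ∈ ℤⁿ`. -/
structure DyadicCube (n : ℕ) where
  j : ℤ
  k : Fin n → ℤ

namespace DyadicCube

/-- The dyadic cube as a subset of `ℝⁿ`. -/
def toSet {n : ℕ} (Q : DyadicCube n) : Set (Fin n → ℝ) :=
  {x | ∀ i, (Q.k i : ℝ) * (2 : ℝ) ^ (-Q.j) ≤ x i ∧
        x i < ((Q.k i : ℝ) + 1) * (2 : ℝ) ^ (-Q.j)}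

/-- The Lebesgue measure `|Q| = 2^{-jn}` of a dyadic cube, as an element of `ℝ≥0∞`. -/
noncomputable def vol {n : ℕ} (Q : DyadicCube n) : ℝ≥0∞ :=
  (2 : ℝ≥0∞) ^ (-(Q.j : ℝ) * n)

/-- The characteristic function `χ_Q`, with values in `ℝ≥0∞`. -/
noncomputable def ind {n : ℕ} (Q : DyadicCube n) (x : Fin n → ℝ) : ℝ≥0∞ :=
  Q.toSet.indicator (fun _ => (1 : ℝ≥0∞)) x

end DyadicCube

open DyadicCube

/-- The coefficient `|Q|^{-s/n - 1/2}`. -/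
noncomputable def coeff {n : ℕ} (s : ℝ) (Q : DyadicCube n) : ℝ≥0∞ :=
  Q.vol ^ (-(s / (n : ℝ)) - 1 / 2)

/-- The `ℓ^q`-norm `(Σ_i a_i^q)^{1/q}` of a family of extended nonnegative reals,
with the usual modification (`sup`) when `q = ∞`. -/
noncomputable def lqSum {ι : Type*} (q : ℝ≥0∞) (a : ι → ℝ≥0∞) : ℝ≥0∞ :=
  if q = ∞ then ⨆ i, a i else (∑' i, a i ^ q.toReal) ^ (1 / q.toReal)

/-- The `L^p`-norm `(∫_A g^p dx)^{1/p}` over a set `A ⊆ ℝⁿ`, with the usual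
modification (`sup` over `x ∈ A`) when `p = ∞`. -/
noncomputable def lpIntOn {n : ℕ} (p : ℝ≥0∞) (A : Set (Fin n → ℝ))
    (g : (Fin n → ℝ) → ℝ≥0∞) : ℝ≥0∞ :=
  if p = ∞ then ⨆ x ∈ A, g x
  else (∫⁻ x in A, g x ^ p.toReal) ^ (1 / p.toReal)

/-- The Triebel–Lizorkin-type sequence norm
`‖t‖_{ḟ^{s,τ}_{p,q}} = sup_P |P|^{-τ} ( ∫_P ( Σ_{Q ⊆ P} [|Q|^{-s/n-1/2} |t_Q| χ_Q(x)]^q )^{p/q} dx )^{1/p}`,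
with the usual modifications when `p = ∞` or `q = ∞`. -/
noncomputable def fNorm (n : ℕ) (s τ : ℝ) (p q : ℝ≥0∞) (t : DyadicCube n → ℂ) : ℝ≥0∞ :=
  ⨆ P : DyadicCube n, P.vol ^ (-τ) *
    lpIntOn p P.toSet fun x =>
      lqSum q fun Q : {Q : DyadicCube n // Q.toSet ⊆ P.toSet} =>
        coeff s Q.1 * ‖t Q.1‖₊ * ind Q.1 x

/-- The Besov-type sequence norm
`‖t‖_{ḃ^{s,τ}_{p,q}} = sup_P |P|^{-τ} ( Σ_{j ≥ j_P} ( ∫_P [ Σ_{Q ⊆ P, ℓ(Q)=2^{-j}} |Q|^{-s/n-1/2} |t_Q| χ_Q(x) ]^p dx )^{q/p} )^{1/q}`,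
with the usual modifications when `p = ∞` or `q = ∞`. -/
noncomputable def bNorm (n : ℕ) (s τ : ℝ) (p q : ℝ≥0∞) (t : DyadicCube n → ℂ) : ℝ≥0∞ :=
  ⨆ P : DyadicCube n, P.vol ^ (-τ) *
    lqSum q fun j : {j : ℤ // P.j ≤ j} =>
      lpIntOn p P.toSet fun x =>
        ∑' Q : {Q : DyadicCube n // Q.toSet ⊆ P.toSet ∧ Q.j = j.1},
          coeff s Q.1 * ‖t Q.1‖₊ * ind Q.1 x

/-- The `ḟ^{σ}_{∞,∞} = ḃ^{σ}_{∞,∞}` sequence norm `sup_Q |Q|^{-σ/n - 1/2} |t_Q|`. -/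
noncomputable def supNorm (n : ℕ) (σ : ℝ) (t : DyadicCube n → ℂ) : ℝ≥0∞ :=
  ⨆ Q : DyadicCube n, coeff σ Q * ‖t Q‖₊

/-- The test sequence with `t_{R_j} = |R_j|^{s/n + 1/2 + τ - 1/p}` for
`R_j = [0,2^{-j})^n` (the dyadic cube with `k = 0`), and `t_Q = 0` otherwise. -/
noncomputable def testSeq (n : ℕ) (s τ p : ℝ) : DyadicCube n → ℂ := fun Q =>
  if Q.k = 0 then
    ((((2 : ℝ) ^ (-(Q.j : ℝ) * n)) ^ (s / n + 1 / 2 + τ - 1 / p) : ℝ) : ℂ)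
  else 0

/-- The cube `R_j = [0, 2^{-j})^n`. -/
def Rcube (n : ℕ) (j : ℤ) : DyadicCube n := ⟨j, 0⟩

lemma toSet_eq_pi {n : ℕ} (Q : DyadicCube n) :
    Q.toSet = Set.univ.pi fun i =>
      Set.Ico ((Q.k i : ℝ) * (2:ℝ)^(-Q.j)) (((Q.k i : ℝ) + 1) * (2:ℝ)^(-Q.j)) := by
  ext x; simp [DyadicCube.toSet, Set.mem_pi]

lemma toSet_measurable {n : ℕ} (Q : DyadicCube n) : MeasurableSet Q.toSet := by
  rw [toSet_eq_pi]; exact MeasurableSet.univ_pi fun i => measurableSet_Ico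

lemma volume_toSet {n : ℕ} (Q : DyadicCube n) : volume Q.toSet = Q.vol := by
  rw [toSet_eq_pi, volume_pi_pi]
  simp only [Real.volume_Ico]
  have h : ∀ i : Fin n, ((Q.k i : ℝ) + 1) * (2:ℝ)^(-Q.j) - (Q.k i : ℝ) * (2:ℝ)^(-Q.j)
      = (2:ℝ)^(-Q.j) := fun i => by ring
  simp_rw [h, Finset.prod_const, Finset.card_univ, Fintype.card_fin]
  have h2 : ((2:ℝ)^(-Q.j) : ℝ) = (2:ℝ) ^ (-(Q.j:ℝ)) := by
    rw [← Real.rpow_intCast]; push_cast; ring_nf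
  rw [h2, ← ENNReal.ofReal_rpow_of_pos (by norm_num : (0:ℝ) < 2)]
  rw [DyadicCube.vol, ENNReal.rpow_mul, ENNReal.rpow_natCast]
  norm_num

lemma vol_ne_zero {n : ℕ} (Q : DyadicCube n) : Q.vol ≠ 0 := by
  simp [DyadicCube.vol, ENNReal.rpow_eq_zero_iff]

lemma vol_ne_top {n : ℕ} (Q : DyadicCube n) : Q.vol ≠ ∞ := by
  simp [DyadicCube.vol, ENNReal.rpow_eq_top_iff]

lemma le_lqSum {ι : Type*} {q : ℝ≥0∞} (hq : q ≠ 0) (a : ι → ℝ≥0∞) (i : ι) :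
    a i ≤ lqSum q a := by
  unfold lqSum
  split_ifs with h
  · exact le_iSup a i
  · have hr : 0 < q.toReal := ENNReal.toReal_pos hq h
    have : a i = (a i ^ q.toReal) ^ (1 / q.toReal) := by
      rw [← ENNReal.rpow_mul, mul_one_div, div_self hr.ne', ENNReal.rpow_one]
    rw [this]
    exact ENNReal.rpow_le_rpow (ENNReal.le_tsum i) (by positivity)

/-- for all `s ∈ ℝ`, `p ∈ (0,∞)`, `q ∈ (0,∞]`, `τ ∈ [0,∞)` and every
sequence `t`, one has `‖t‖_{ḟ^{s+n(τ-1/p)}_{∞,∞}} ≤ ‖t‖_{ḟ^{s,τ}_{p,q}}`. -/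
theorem stmt0 (n : ℕ) (hn : 0 < n) (s τ : ℝ) (p q : ℝ≥0∞)
    (hp : 0 < p) (hp' : p ≠ ∞) (hq : 0 < q) (hτ : 0 ≤ τ)
    (t : DyadicCube n → ℂ) :
    supNorm n (s + n * (τ - 1 / p.toReal)) t ≤ fNorm n s τ p q t := by
  apply iSup_le; intro Q
  refine le_trans ?_ (le_iSup _ Q)
  set r := p.toReal with hrdef
  have hr : 0 < r := ENNReal.toReal_pos hp.ne' hp'
  have hv0 : Q.vol ≠ 0 := vol_ne_zero Q
  have hvt : Q.vol ≠ ∞ := vol_ne_top Q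
  set c : ℝ≥0∞ := coeff s Q * ‖t Q‖₊ with hc
  have key : c * Q.vol ^ (1 / r) ≤
      lpIntOn p Q.toSet fun x =>
        lqSum q fun Q' : {Q' : DyadicCube n // Q'.toSet ⊆ Q.toSet} =>
          coeff s Q'.1 * ‖t Q'.1‖₊ * ind Q'.1 x := by
    rw [lpIntOn, if_neg hp']
    have hpt : ∀ x ∈ Q.toSet, c ^ r ≤
        (lqSum q fun Q' : {Q' : DyadicCube n // Q'.toSet ⊆ Q.toSet} =>
          coeff s Q'.1 * ‖t Q'.1‖₊ * ind Q'.1 x) ^ r := by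
      intro x hx
      refine ENNReal.rpow_le_rpow ?_ hr.le
      have := le_lqSum (q := q) hq.ne'
        (fun Q' : {Q' : DyadicCube n // Q'.toSet ⊆ Q.toSet} =>
          coeff s Q'.1 * ‖t Q'.1‖₊ * ind Q'.1 x) ⟨Q, subset_rfl⟩
      simpa [hc, DyadicCube.ind, Set.indicator_of_mem hx] using this
    have h1 : c ^ r * Q.vol ≤ ∫⁻ x in Q.toSet,
        (lqSum q fun Q' : {Q' : DyadicCube n // Q'.toSet ⊆ Q.toSet} =>
          coeff s Q'.1 * ‖t Q'.1‖₊ * ind Q'.1 x) ^ r := by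
      calc c ^ r * Q.vol = ∫⁻ _ in Q.toSet, c ^ r := by
            rw [setLIntegral_const, volume_toSet]
        _ ≤ _ := setLIntegral_mono' (toSet_measurable Q) hpt
    calc c * Q.vol ^ (1 / r) = (c ^ r * Q.vol) ^ (1 / r) := by
          rw [ENNReal.mul_rpow_of_nonneg _ _ (by positivity),
            ← ENNReal.rpow_mul, mul_one_div, div_self hr.ne', ENNReal.rpow_one]
      _ ≤ _ := ENNReal.rpow_le_rpow h1 (by positivity)
  have hEq : coeff (s + n * (τ - 1 / r)) Q * ‖t Q‖₊
      = Q.vol ^ (-τ) * (c * Q.vol ^ (1 / r)) := by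
    have hn' : (n : ℝ) ≠ 0 := Nat.cast_ne_zero.mpr hn.ne'
    have hexp : -((s + n * (τ - 1 / r)) / n) - 1 / 2
        = -τ + ((-(s / n) - 1 / 2) + 1 / r) := by field_simp; ring
    rw [coeff, hexp, ENNReal.rpow_add _ _ hv0 hvt, ENNReal.rpow_add _ _ hv0 hvt]
    rw [hc, coeff]
    ring
  rw [hEq]
  exact mul_le_mul_right key _
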